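/- Adding a node x to every cluster on the undirected path between two clusters C_a and C_b of a tree of clusters that already satisfies the running intersection property, where x already belongs to C_a and the clusters containing x previously formed a connected subtree including C_a, yields a tree of clusters that still satisfies the running intersection property. -/

import Mathlib

/-- Adding a node `x` to every cluster on the undirected path `p` between two clusters `C a`
and `C b` of a tree of clusters satisfying the running intersection property, where `x`
already belongs to `C a` (so that the clusters containing `x` previously formed a connected
subtree including `C a`, a consequence of the running intersection property), yields a tree
of clusters that still satisfies the running intersection property. -/
theorem stmt13 {V N : Type*} [DecidableEq V] (G : SimpleGraph V) (hT : G.IsTree)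
    (C : V → Set N)
    (RIP : ∀ (u v w : V) (q : G.Walk u v), q.IsPath → w ∈ q.support → C u ∩ C v ⊆ C w)
    (x : N) (a b : V) (hxa : x ∈ C a)
    -- the clusters containing `x` form a connected subtree including `C a`
    (hconn : (G.induce {v : V | x ∈ C v}).Connected)
    (p : G.Walk a b) (hp : p.IsPath)
    (C' : V → Set N)
    (hC' : ∀ v, C' v = if v ∈ p.support then insert x (C v) else C v) :
    ∀ (u v w : V) (q : G.Walk u v), q.IsPath → w ∈ q.support → C' u ∩ C' v ⊆ C' w := by
  intro u v w q hq hw n hn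
  by_cases hnx : n = x
  · subst hnx
    have key : ∀ t, n ∈ C' t → ∃ r : G.Walk a t, ∀ z ∈ r.support, n ∈ C' z := by
      intro t ht
      rw [hC' t] at ht
      split_ifs at ht with h
      · refine ⟨p.takeUntil t h, fun z hz => ?_⟩
        have hz' : z ∈ p.support := p.support_takeUntil_subset h hz
        rw [hC' z]
        simp [hz']
      · obtain ⟨r⟩ := hconn ⟨a, hxa⟩ ⟨t, ht⟩
        refine ⟨r.map (SimpleGraph.Embedding.induce _).toHom, fun z hz => ?_⟩
        erw [SimpleGraph.Walk.support_map] at hz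
        obtain ⟨⟨z', hz'⟩, _, rfl⟩ := List.mem_map.mp hz
        show n ∈ C' z'
        rw [hC' z']
        split_ifs
        · exact Set.mem_insert _ _
        · exact hz' 
    obtain ⟨ru, hru⟩ := key u hn.1
    obtain ⟨rv, hrv⟩ := key v hn.2
    set W : G.Walk u v := ru.reverse.append rv with hW
    have hWsup : ∀ z ∈ W.support, n ∈ C' z := by
      intro z hz
      rw [hW, SimpleGraph.Walk.mem_support_append_iff] at hz
      rcases hz with hz | hz
      · exact hru z (by simpa using hz)
      · exact hrv z hz
    have hqeq : q = W.bypass := (hT.existsUnique_path u v).unique hq W.bypass_isPath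
    have : w ∈ W.support := W.support_bypass_subset (hqeq ▸ hw)
    exact hWsup w this
  · have hmem : ∀ t, n ∈ C' t → n ∈ C t := by
      intro t ht
      rw [hC' t] at ht
      split_ifs at ht
      · exact (Set.mem_insert_iff.mp ht).resolve_left hnx
      · exact ht
    have hcw : n ∈ C w := RIP u v w q hq hw ⟨hmem u hn.1, hmem v hn.2⟩
    rw [hC' w]
    split_ifs
    · exact Set.mem_insert_of_mem _ hcw
    · exact hcw
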